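/- Let α, β₁, β₂, γ₁, γ₂ be complex numbers with Re γ₁ > Re β₁ > 0 and Re γ₂ > Re β₂ > 0, and let A, B be real numbers with A > B > 1. Then A^{−α} · F₂(α; β₁, β₂; γ₁, γ₂; 1/A, 1 − B/A) = Γ(γ₂) (A−B)^{1−γ₂} / (Γ(β₂)Γ(γ₂−β₂)) · ∫_B^A (A−U)^{β₂−1} (U−B)^{γ₂−β₂−1} U^{−α} · ₂F₁(α, β₁; γ₁; 1/U) dU, where all complex powers of the positive real quantities A, A−B, A−U, U−B, U are principal branch powers. (Note that 1/A + |1 − B/A| = (1 + A − B)/A < 1 since B > 1, so the F₂ series converges.) -/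

import Mathlib

set_option maxHeartbeats 2000000

open Complex MeasureTheory

/-- Pochhammer symbol `(x)_n` in `ℂ`. -/
noncomputable def cpoch (x : ℂ) (n : ℕ) : ℂ := (ascPochhammer ℂ n).eval x

/-- Gauss' hypergeometric series `₂F₁`. -/
noncomputable def hyp2F1 (a b c z : ℂ) : ℂ :=
  ∑' n : ℕ, cpoch a n * cpoch b n / (cpoch c n * (n.factorial : ℂ)) * z ^ n

/-- Appell's hypergeometric series `F₂`. -/
noncomputable def appellF2 (a b₁ b₂ c₁ c₂ z₁ z₂ : ℂ) : ℂ :=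
  ∑' p : ℕ × ℕ, cpoch a (p.1 + p.2) * cpoch b₁ p.1 * cpoch b₂ p.2 /
    (cpoch c₁ p.1 * cpoch c₂ p.2 * (p.1.factorial : ℂ) * (p.2.factorial : ℂ)) *
    z₁ ^ p.1 * z₂ ^ p.2

open Set

namespace Aux1


lemma cpoch_zero (x : ℂ) : cpoch x 0 = 1 := by simp [cpoch]

lemma cpoch_succ (x : ℂ) (n : ℕ) : cpoch x (n+1) = cpoch x n * (x + n) := by
  simp [cpoch, ascPochhammer_succ_eval]

lemma cpoch_one (x : ℂ) : cpoch x 1 = x := by simp [cpoch]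

lemma cpoch_add (x : ℂ) (m n : ℕ) : cpoch x (m + n) = cpoch x m * cpoch (x + m) n := by
  induction n with
  | zero => simp [cpoch_zero]
  | succ n ih => rw [← Nat.add_assoc, cpoch_succ, ih, cpoch_succ]; push_cast; ring

lemma cpoch_succ_left (x : ℂ) (n : ℕ) : cpoch x (n+1) = x * cpoch (x + 1) n := by
  have := cpoch_add x 1 n
  rw [Nat.add_comm 1 n] at this
  simpa [cpoch_one] using this

lemma norm_cpoch_succ (x : ℂ) (n : ℕ) : ‖cpoch x (n+1)‖ = ‖cpoch x n‖ * ‖x + n‖ := by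
  rw [cpoch_succ, norm_mul]

lemma pow_aux : ∀ (N n : ℕ), ((n:ℝ)+1)^N * ((N:ℝ)+n) ≤ ((n:ℝ)+1) * ((n:ℝ)+2)^N := by
  intro N
  induction N with
  | zero => intro n; simp
  | succ N ih => intro n
                 have h1 : ((n:ℝ)+1)^N * ((N:ℝ)+n) ≤ ((n:ℝ)+1) * ((n:ℝ)+2)^N := ih n
                 have h2 : ((n:ℝ)+1)^N ≤ ((n:ℝ)+2)^N := by
                   apply pow_le_pow_left₀ (by positivity); linarith
                 have hn : (0:ℝ) ≤ (n:ℝ) := Nat.cast_nonneg n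
                 have h3 : ((n:ℝ)+1)^(N+1) * ((N:ℝ)+1+n) =
                     ((n:ℝ)+1) * (((n:ℝ)+1)^N * ((N:ℝ)+n) + ((n:ℝ)+1)^N) := by ring
                 push_cast
                 rw [h3]
                 have h4 : ((n:ℝ)+1)^N * ((N:ℝ)+n) + ((n:ℝ)+1)^N ≤
                     ((n:ℝ)+1) * ((n:ℝ)+2)^N + ((n:ℝ)+2)^N := by linarith
                 calc ((n:ℝ)+1) * (((n:ℝ)+1)^N * ((N:ℝ)+n) + ((n:ℝ)+1)^N)
                     ≤ ((n:ℝ)+1) * (((n:ℝ)+1) * ((n:ℝ)+2)^N + ((n:ℝ)+2)^N) := by nlinarith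
                   _ = ((n:ℝ)+1) * ((n:ℝ)+2)^(N+1) := by ring
                   _ ≤ ((n:ℝ)+1) * ((n:ℝ)+2)^(N+1) := le_refl _

lemma norm_cpoch_le (x : ℂ) {N : ℕ} (h : ‖x‖ ≤ N) :
    ∀ n, ‖cpoch x n‖ ≤ n.factorial * ((n:ℝ)+1)^N := by
  intro n
  induction n with
  | zero => simp [cpoch_zero]
  | succ n ih =>
    push_cast
    rw [norm_cpoch_succ]
    have hx : ‖x + n‖ ≤ (N:ℝ) + n := by
      calc ‖x + n‖ ≤ ‖x‖ + ‖(n:ℂ)‖ := norm_add_le _ _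
        _ ≤ (N:ℝ) + n := by simp; exact h
    calc ‖cpoch x n‖ * ‖x + n‖ ≤ (n.factorial * ((n:ℝ)+1)^N) * ((N:ℝ)+n) := by
          apply mul_le_mul ih hx (norm_nonneg _) (by positivity)
      _ ≤ n.factorial * (((n:ℝ)+1) * ((n:ℝ)+2)^N) := by
          rw [mul_assoc]
          exact mul_le_mul_of_nonneg_left (pow_aux N n) (by positivity)
      _ = (n+1).factorial * (((n:ℝ)+1)+1)^N := by
          rw [Nat.factorial_succ]; push_cast; ring

lemma norm_cpoch_lb (x : ℂ) (hx : 0 < x.re) :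
    ∀ n, x.re * n.factorial ≤ ‖cpoch x (n+1)‖ := by
  intro n
  induction n with
  | zero => simpa [cpoch_one] using (le_abs_self x.re).trans (Complex.abs_re_le_norm x)
  | succ n ih =>
    have h1 : ((n:ℝ)+1) ≤ ‖x + ((n+1:ℕ):ℂ)‖ := by
      have : ((n:ℝ)+1) ≤ (x + ((n+1:ℕ):ℂ)).re := by simp; linarith
      exact this.trans ((le_abs_self _).trans (Complex.abs_re_le_norm _))
    calc x.re * (n+1).factorial = (x.re * n.factorial) * ((n:ℝ)+1) := by
          rw [Nat.factorial_succ]; push_cast; ring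
      _ ≤ ‖cpoch x (n+1)‖ * ‖x + ((n+1:ℕ):ℂ)‖ := by
          apply mul_le_mul ih h1 (by positivity) (norm_nonneg _)
      _ = ‖cpoch x (n+1+1)‖ := (norm_cpoch_succ x (n+1)).symm

lemma cpoch_ne_zero (x : ℂ) (hx : 0 < x.re) (n : ℕ) : cpoch x n ≠ 0 := by
  induction n with
  | zero => simp [cpoch_zero]
  | succ n ih =>
    rw [cpoch_succ]
    apply mul_ne_zero ih
    intro h
    have : (x + n).re = 0 := by rw [h]; simp
    simp at this
    have : (0:ℝ) ≤ (n:ℝ) := Nat.cast_nonneg n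
    linarith

lemma inv_norm_cpoch_le (x : ℂ) (hx : 0 < x.re) (n : ℕ) :
    ‖cpoch x n‖⁻¹ ≤ (max 1 x.re⁻¹) * ((n:ℝ)+1) / n.factorial := by
  cases n with
  | zero =>
    simp only [cpoch_zero, norm_one, inv_one, Nat.factorial_zero, Nat.cast_zero,
      Nat.cast_one, zero_add, mul_one, div_one]
    exact le_max_left _ _
  | succ n =>
    have hlb := norm_cpoch_lb x hx n
    have hpos : 0 < x.re * n.factorial := by positivity
    have h1 : ‖cpoch x (n+1)‖⁻¹ ≤ (x.re * n.factorial)⁻¹ :=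
      inv_anti₀ hpos hlb
    apply h1.trans
    rw [mul_inv]
    have h2 : (x.re)⁻¹ ≤ max 1 x.re⁻¹ := le_max_right _ _
    have hf : (0:ℝ) < n.factorial := by positivity
    have h3 : ((n.factorial:ℝ))⁻¹ ≤ ((n:ℕ)+1+1:ℝ)/(n+1).factorial := by
      rw [Nat.factorial_succ, le_div_iff₀ (by positivity)]
      push_cast
      rw [inv_mul_le_iff₀ hf]
      nlinarith [Nat.cast_nonneg (α := ℝ) n]
    calc x.re⁻¹ * ((n.factorial:ℝ))⁻¹ ≤ (max 1 x.re⁻¹) * (((n:ℕ)+1+1:ℝ)/(n+1).factorial) := by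
          apply mul_le_mul h2 h3 (by positivity) (le_trans zero_le_one (le_max_left _ _))
      _ = (max 1 x.re⁻¹) * (((n+1:ℕ):ℝ)+1) / (n+1).factorial := by
          push_cast; ring


lemma sum_poly_geo (K : ℕ) {s : ℝ} (h0 : 0 ≤ s) (h1 : s < 1) :
    Summable (fun n : ℕ => ((n:ℝ)+1)^K * s^n) := by
  rcases eq_or_lt_of_le h0 with h|h
  · apply summable_of_ne_finset_zero (s := {0})
    intro n hn
    simp only [Finset.mem_singleton] at hn
    simp [← h, zero_pow hn]
  · have hs : ‖s‖ < 1 := by rwa [Real.norm_eq_abs, abs_of_pos h]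
    have H := summable_pow_mul_geometric_of_norm_lt_one K hs
    have H2 : Summable (fun n : ℕ => ((n+1:ℕ):ℝ)^K * s^(n+1)) :=
      H.comp_injective (add_left_injective 1)
    have H3 := H2.mul_right s⁻¹
    apply H3.congr
    intro n
    have hne : s ≠ 0 := ne_of_gt h
    push_cast
    field_simp
    ring

lemma choose_mul_le (m n : ℕ) {r₁ r₂ : ℝ} (h1 : 0 ≤ r₁) (h2 : 0 ≤ r₂) :
    ((m+n).choose m : ℝ) * r₁^m * r₂^n ≤ (r₁+r₂)^(m+n) := by
  rw [add_pow]
  have hm : m ∈ Finset.range (m+n+1) := by simp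
  have hnn : ∀ k ∈ Finset.range (m+n+1),
      (0:ℝ) ≤ r₁^k * r₂^(m+n-k) * ((m+n).choose k : ℝ) := by
    intro k _; positivity
  have := Finset.single_le_sum hnn hm
  calc ((m+n).choose m : ℝ) * r₁^m * r₂^n
      = r₁^m * r₂^(m+n-m) * ((m+n).choose m : ℝ) := by
        rw [Nat.add_sub_cancel_left]; ring
    _ ≤ _ := this

lemma factorial_div_eq_choose (m n : ℕ) :
    ((m+n).factorial : ℝ) / (m.factorial * n.factorial) = ((m+n).choose m : ℝ) := by
  have h := Nat.choose_mul_factorial_mul_factorial (Nat.le_add_right m n)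
  rw [Nat.add_sub_cancel_left] at h
  have h2 : ((m+n).choose m * (m.factorial * n.factorial) : ℕ) = ((m+n).factorial : ℕ) := by
    rw [← h]; ring
  field_simp
  exact_mod_cast h2.symm.trans (Nat.mul_comm _ _)

lemma sumE (α β₁ γ₁ : ℂ) (hγ₁ : 0 < γ₁.re) {r₁ r₂ : ℝ} (h₁ : 0 ≤ r₁) (h₂ : 0 ≤ r₂)
    (h : r₁ + r₂ < 1) :
    Summable (fun p : ℕ × ℕ =>
      ‖cpoch α (p.1+p.2)‖ * ‖cpoch β₁ p.1‖ /
        (‖cpoch γ₁ p.1‖ * p.1.factorial * p.2.factorial) * r₁^p.1 * r₂^p.2) := by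
  obtain ⟨N, hα, hβ⟩ : ∃ N : ℕ, ‖α‖ ≤ ↑N ∧ ‖β₁‖ ≤ ↑N := by
    refine ⟨max ⌈‖α‖⌉₊ ⌈‖β₁‖⌉₊, ?_, ?_⟩
    · exact le_trans (Nat.le_ceil _) (by exact_mod_cast Nat.cast_le.mpr (le_max_left _ _))
    · exact le_trans (Nat.le_ceil _) (by exact_mod_cast Nat.cast_le.mpr (le_max_right _ _))
  obtain ⟨D, hD0, hcD⟩ : ∃ D : ℝ, 0 < D ∧
      ∀ n : ℕ, ‖cpoch γ₁ n‖⁻¹ ≤ D * ((n:ℝ)+1) / n.factorial :=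
    ⟨max 1 γ₁.re⁻¹, lt_of_lt_of_le one_pos (le_max_left _ _), inv_norm_cpoch_le γ₁ hγ₁⟩
  set s : ℝ := r₁ + r₂ with hs
  have hs0 : 0 ≤ s := add_nonneg h₁ h₂
  have hs1 : s < 1 := h
  apply Summable.of_nonneg_of_le (f := fun p : ℕ × ℕ =>
    (D * (((p.1:ℝ)+1)^(2*N+1) * s^p.1)) * (((p.2:ℝ)+1)^N * s^p.2))
  · intro p
    have hg : (0:ℝ) < ‖cpoch γ₁ p.1‖ := norm_pos_iff.mpr (cpoch_ne_zero γ₁ hγ₁ p.1)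
    positivity
  · rintro ⟨m, n⟩
    dsimp only
    have hg : (0:ℝ) < ‖cpoch γ₁ m‖ := norm_pos_iff.mpr (cpoch_ne_zero γ₁ hγ₁ m)
    have ha := norm_cpoch_le α hα (m+n)
    have hb := norm_cpoch_le β₁ hβ m
    have hc := hcD m
    have e1 : ‖cpoch α (m+n)‖ * ‖cpoch β₁ m‖ / (‖cpoch γ₁ m‖ * m.factorial * n.factorial)
        * r₁^m * r₂^n
        = (‖cpoch α (m+n)‖ * ‖cpoch β₁ m‖ * ‖cpoch γ₁ m‖⁻¹)
          * ((m.factorial : ℝ)⁻¹ * (n.factorial:ℝ)⁻¹ * r₁^m * r₂^n) := by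
      field_simp
    rw [e1]
    have e2 : ‖cpoch α (m+n)‖ * ‖cpoch β₁ m‖ * ‖cpoch γ₁ m‖⁻¹
        ≤ ((m+n).factorial * ((m+n:ℝ)+1)^N) * (m.factorial * ((m:ℝ)+1)^N)
          * (D * ((m:ℝ)+1) / m.factorial) := by
      have h3 : (0:ℝ) ≤ ‖cpoch α (m+n)‖ := norm_nonneg _
      push_cast at ha ⊢
      apply mul_le_mul (mul_le_mul ha hb (norm_nonneg _) (by positivity)) hc
        (by positivity) (by positivity)
    calc (‖cpoch α (m+n)‖ * ‖cpoch β₁ m‖ * ‖cpoch γ₁ m‖⁻¹)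
          * ((m.factorial : ℝ)⁻¹ * (n.factorial:ℝ)⁻¹ * r₁^m * r₂^n)
        ≤ (((m+n).factorial * ((m+n:ℝ)+1)^N) * (m.factorial * ((m:ℝ)+1)^N)
            * (D * ((m:ℝ)+1) / m.factorial))
          * ((m.factorial : ℝ)⁻¹ * (n.factorial:ℝ)⁻¹ * r₁^m * r₂^n) := by
          apply mul_le_mul_of_nonneg_right e2 (by positivity)
      _ = D * ((m+n:ℝ)+1)^N * ((m:ℝ)+1)^(N+1)
            * (((m+n).factorial : ℝ) / (m.factorial * n.factorial) * r₁^m * r₂^n) := by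
          have hm : (0:ℝ) < m.factorial := by positivity
          have hn : (0:ℝ) < n.factorial := by positivity
          field_simp
          ring
      _ = D * ((m+n:ℝ)+1)^N * ((m:ℝ)+1)^(N+1)
            * (((m+n).choose m : ℝ) * r₁^m * r₂^n) := by
          rw [factorial_div_eq_choose]
      _ ≤ D * ((m+n:ℝ)+1)^N * ((m:ℝ)+1)^(N+1) * s^(m+n) := by
          apply mul_le_mul_of_nonneg_left (choose_mul_le m n h₁ h₂) (by positivity)
      _ ≤ D * (((m:ℝ)+1)*((n:ℝ)+1))^N * ((m:ℝ)+1)^(N+1) * s^(m+n) := by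
          have hmn : (0:ℝ) ≤ (m:ℝ)*(n:ℝ) := by positivity
          gcongr
          push_cast
          nlinarith [hmn]
      _ = (D * (((m:ℝ)+1)^(2*N+1) * s^m)) * (((n:ℝ)+1)^N * s^n) := by
          rw [mul_pow, pow_add]
          ring
  · exact Summable.mul_of_nonneg
      (f := fun m : ℕ => D * (((m:ℝ)+1)^(2*N+1) * s^m))
      (g := fun n : ℕ => ((n:ℝ)+1)^N * s^n)
      ((sum_poly_geo (2*N+1) hs0 hs1).mul_left D)
      (sum_poly_geo N hs0 hs1)
      (fun m => by positivity) (fun n => by positivity)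

lemma sum1D (a : ℂ) {x : ℝ} (h0 : 0 ≤ x) (h1 : x < 1) :
    Summable (fun n : ℕ => cpoch a n / (n.factorial : ℂ) * (x:ℂ)^n) := by
  set N : ℕ := ⌈‖a‖⌉₊ with hN
  have ha : ‖a‖ ≤ N := Nat.le_ceil _
  apply Summable.of_norm
  apply Summable.of_nonneg_of_le (f := fun n : ℕ => ((n:ℝ)+1)^N * x^n)
    (fun n => norm_nonneg _)
  · intro n
    have hf : (0:ℝ) < n.factorial := by positivity
    rw [norm_mul, norm_div]
    have hx : ‖(x:ℂ)^n‖ = x^n := by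
      rw [norm_pow, Complex.norm_real, Real.norm_eq_abs, _root_.abs_of_nonneg h0]
    rw [hx]
    have : ‖cpoch a n‖ / ‖(n.factorial:ℂ)‖ ≤ ((n:ℝ)+1)^N := by
      rw [Complex.norm_natCast, div_le_iff₀ hf]
      calc ‖cpoch a n‖ ≤ n.factorial * ((n:ℝ)+1)^N := norm_cpoch_le a ha n
        _ = ((n:ℝ)+1)^N * n.factorial := by ring
    exact mul_le_mul_of_nonneg_right this (by positivity)
  · exact sum_poly_geo N h0 h1


lemma cpoch_ofReal (c : ℝ) (n : ℕ) :
    cpoch (c:ℂ) n = (((ascPochhammer ℝ n).eval c : ℝ) : ℂ) := by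
  induction n with
  | zero => simp [cpoch]
  | succ n ih => rw [cpoch, ascPochhammer_succ_eval, ← cpoch, ih, ascPochhammer_succ_eval]
                 push_cast; ring

lemma rpoch_pos (c : ℝ) (hc : 0 < c) (n : ℕ) : 0 < (ascPochhammer ℝ n).eval c := by
  induction n with
  | zero => simp
  | succ n ih => rw [ascPochhammer_succ_eval]; positivity

lemma Real.Gamma_add_nat (c : ℝ) (hc : 0 < c) (n : ℕ) :
    Real.Gamma (c + n) = (ascPochhammer ℝ n).eval c * Real.Gamma c := by
  induction n with
  | zero => simp
  | succ n ih =>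
    have h1 : c + (n+1:ℕ) = (c + n) + 1 := by push_cast; ring
    rw [h1, Real.Gamma_add_one (by positivity), ih, ascPochhammer_succ_eval]
    ring

lemma Complex.Gamma_add_nat (a : ℂ) (ha : 0 < a.re) (n : ℕ) :
    Complex.Gamma (a + n) = cpoch a n * Complex.Gamma a := by
  induction n with
  | zero => simp [cpoch_zero]
  | succ n ih =>
    have h1 : a + (n+1:ℕ) = (a + n) + 1 := by push_cast; ring
    have h2 : a + (n:ℕ) ≠ 0 := by
      intro h
      have := congrArg Complex.re h
      simp at this
      have : (0:ℝ) ≤ (n:ℝ) := Nat.cast_nonneg n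
      linarith
    rw [h1, Complex.Gamma_add_one _ h2, ih, cpoch_succ]
    ring

lemma Complex.Gamma_pos_ne_zero (a : ℂ) (ha : 0 < a.re) : Complex.Gamma a ≠ 0 := by
  apply Complex.Gamma_ne_zero
  intro m h
  rw [h] at ha
  simp at ha
  have : (0:ℝ) ≤ (m:ℝ) := Nat.cast_nonneg m
  linarith

lemma binom_base (a : ℂ) (ha : 0 < a.re) (x : ℝ) (h0 : 0 ≤ x) (h1 : x < 1) :
    HasSum (fun n : ℕ => cpoch a n / (n.factorial : ℂ) * (x:ℂ)^n)
      (((1 - x : ℝ):ℂ)^(-a)) := by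
  have hb : 0 < 1 - x := by linarith
  set F : ℕ → ℝ → ℂ :=
    fun n u => ((x:ℂ)^n / (n.factorial : ℂ)) * (↑(Real.exp (-u)) * (u:ℂ)^(a + n - 1)) with hF
  have hre : ∀ n : ℕ, 0 < (a + (n:ℂ)).re := by
    intro n; simp only [add_re, natCast_re]
    have : (0:ℝ) ≤ (n:ℝ) := Nat.cast_nonneg n
    linarith
  have hint : ∀ n, Integrable (F n) (volume.restrict (Ioi 0)) := by
    intro n
    have := (Complex.GammaIntegral_convergent (hre n))
    exact (this.const_mul _)
  have hnorm : ∀ n : ℕ, ∫ u in Ioi 0, ‖F n u‖ =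
      x^n / n.factorial * Real.Gamma (a.re + n) := by
    intro n
    have hcong : ∀ u ∈ Ioi (0:ℝ), ‖F n u‖ =
        x^n / n.factorial * (Real.exp (-u) * u^(a.re + n - 1)) := by
      intro u hu
      rw [mem_Ioi] at hu
      rw [hF]
      simp only [norm_mul, norm_div, norm_pow, Complex.norm_real, Real.norm_eq_abs,
        Complex.norm_natCast]
      rw [_root_.abs_of_nonneg h0, _root_.abs_of_nonneg (Real.exp_pos _).le,
        Complex.norm_cpow_eq_rpow_re_of_pos hu]
      have : (a + ↑n - 1).re = a.re + n - 1 := by simp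
      rw [this]
    rw [setIntegral_congr_fun measurableSet_Ioi hcong, MeasureTheory.integral_const_mul,
      ← Real.Gamma_eq_integral (by positivity : 0 < a.re + n)]
  have hsum : Summable (fun n : ℕ => ∫ u in Ioi 0, ‖F n u‖) := by
    simp_rw [hnorm]
    set c := a.re
    set N : ℕ := ⌈c⌉₊
    have hcN : ‖(c:ℂ)‖ ≤ N := by
      rw [Complex.norm_real, Real.norm_eq_abs, _root_.abs_of_nonneg ha.le]
      exact Nat.le_ceil _
    apply Summable.of_nonneg_of_le
      (f := fun n : ℕ => Real.Gamma c * (((n:ℝ)+1)^N * x^n))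
    · intro n
      have := Real.Gamma_pos_of_pos (by positivity : (0:ℝ) < c + n)
      positivity
    · intro n
      rw [Real.Gamma_add_nat c ha n]
      have hg := Real.Gamma_pos_of_pos ha
      have hrp : (ascPochhammer ℝ n).eval c ≤ n.factorial * ((n:ℝ)+1)^N := by
        have := norm_cpoch_le (c:ℂ) hcN n
        rwa [cpoch_ofReal, Complex.norm_real, Real.norm_eq_abs,
          _root_.abs_of_nonneg (rpoch_pos c ha n).le] at this
      have hf : (0:ℝ) < n.factorial := by positivity
      calc x^n / n.factorial * ((ascPochhammer ℝ n).eval c * Real.Gamma c)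
          ≤ x^n / n.factorial * ((n.factorial * ((n:ℝ)+1)^N) * Real.Gamma c) := by
            apply mul_le_mul_of_nonneg_left _ (by positivity)
            exact mul_le_mul_of_nonneg_right hrp hg.le
        _ = Real.Gamma c * (((n:ℝ)+1)^N * x^n) := by field_simp
    · exact (sum_poly_geo N h0 h1).mul_left _
  have key := integral_tsum_of_summable_integral_norm hint hsum
  have hptwise : ∀ u ∈ Ioi (0:ℝ), (∑' n, F n u) =
      (u:ℂ)^(a - 1) * Complex.exp (-(((1-x:ℝ):ℂ) * (u:ℂ))) := by
    intro u hu
    rw [mem_Ioi] at hu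
    have hu0 : (u:ℂ) ≠ 0 := ofReal_ne_zero.mpr hu.ne'
    have hsplit : ∀ n : ℕ, F n u =
        (↑(Real.exp (-u)) * (u:ℂ)^(a - 1)) * (((x:ℂ) * u)^n / n.factorial) := by
      intro n
      simp only [hF]
      have : (u:ℂ)^(a + n - 1) = (u:ℂ)^(a-1) * (u:ℂ)^(n:ℕ) := by
        rw [← Complex.cpow_natCast, ← Complex.cpow_add _ _ hu0]
        ring_nf
      rw [this, mul_pow]
      ring
    calc (∑' n, F n u)
        = ∑' n, (↑(Real.exp (-u)) * (u:ℂ)^(a - 1)) * (((x:ℂ) * u)^n / n.factorial) := by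
          exact tsum_congr hsplit
      _ = (↑(Real.exp (-u)) * (u:ℂ)^(a - 1)) * ∑' n, (((x:ℂ) * u)^n / n.factorial) :=
          tsum_mul_left
      _ = (↑(Real.exp (-u)) * (u:ℂ)^(a - 1)) * Complex.exp ((x:ℂ) * u) := by
          rw [Complex.exp_eq_exp_ℂ, NormedSpace.exp_eq_tsum_div]
      _ = (u:ℂ)^(a - 1) * Complex.exp (-(((1-x:ℝ):ℂ) * (u:ℂ))) := by
          rw [Complex.ofReal_exp]
          rw [mul_comm (Complex.exp _) ((u:ℂ)^(a-1)), mul_assoc, ← Complex.exp_add]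
          congr 1
          push_cast
          ring
  have harg : ((1-x:ℝ):ℂ).arg ≠ Real.pi := by
    rw [Complex.arg_ofReal_of_nonneg hb.le]
    exact fun h => Real.pi_ne_zero h.symm
  have hval : ∫ u in Ioi (0:ℝ), (u:ℂ)^(a - 1) * Complex.exp (-(((1-x:ℝ):ℂ) * (u:ℂ)))
      = ((1-x:ℝ):ℂ)^(-a) * Complex.Gamma a := by
    have := Complex.integral_cpow_mul_exp_neg_mul_Ioi ha hb
    rw [this]
    congr 1
    rw [one_div, Complex.inv_cpow _ _ harg, ← Complex.cpow_neg]
  have hL : ∀ n : ℕ, (∫ u in Ioi (0:ℝ), F n u)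
      = cpoch a n / (n.factorial : ℂ) * (x:ℂ)^n * Complex.Gamma a := by
    intro n
    have : (∫ u in Ioi (0:ℝ), F n u)
        = ((x:ℂ)^n / (n.factorial : ℂ)) * ∫ u in Ioi (0:ℝ), ↑(Real.exp (-u)) * (u:ℂ)^(a + n - 1) := by
      simp only [hF]
      rw [MeasureTheory.integral_const_mul]
    rw [this, ← Complex.GammaIntegral, ← Complex.Gamma_eq_integral (hre n),
      Complex.Gamma_add_nat a ha n]
    ring
  have hEq : (∑' n : ℕ, cpoch a n / (n.factorial : ℂ) * (x:ℂ)^n) * Complex.Gamma a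
      = ((1-x:ℝ):ℂ)^(-a) * Complex.Gamma a := by
    rw [← tsum_mul_right, ← hval]
    rw [← setIntegral_congr_fun measurableSet_Ioi hptwise, ← key]
    exact tsum_congr (fun n => (hL n).symm)
  have hΓ : Complex.Gamma a ≠ 0 := Complex.Gamma_pos_ne_zero a ha
  have htsum : (∑' n : ℕ, cpoch a n / (n.factorial : ℂ) * (x:ℂ)^n) = ((1-x:ℝ):ℂ)^(-a) :=
    mul_right_cancel₀ hΓ hEq
  exact (Summable.hasSum_iff (sum1D a h0 h1)).mpr htsum

lemma binom_step (a : ℂ) (x : ℝ) (S : ℂ)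
    (H : HasSum (fun n : ℕ => cpoch (a+1) n / (n.factorial : ℂ) * (x:ℂ)^n) S) :
    HasSum (fun n : ℕ => cpoch a n / (n.factorial : ℂ) * (x:ℂ)^n) ((1 - (x:ℂ)) * S) := by
  set g : ℕ → ℂ := fun n => cpoch (a+1) n / (n.factorial : ℂ) * (x:ℂ)^n with hg
  set f2 : ℕ → ℂ := fun n => Nat.rec 0 (fun k _ => (x:ℂ) * g k) n with hf2
  have hshift : (fun n : ℕ => f2 (n + 1)) = fun n => (x:ℂ) * g n := rfl
  have H2 : HasSum (fun n : ℕ => f2 (n+1)) ((x:ℂ) * S) := by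
    rw [hshift]; exact H.mul_left _
  have H3 : HasSum f2 ((x:ℂ) * S) := by
    have := (hasSum_nat_add_iff (f := f2) 1).mp H2
    have hz : f2 0 = 0 := rfl
    simpa [hz] using this
  have H4 := H.sub H3
  have hfun : (fun n : ℕ => g n - f2 n) =
      fun n : ℕ => cpoch a n / (n.factorial : ℂ) * (x:ℂ)^n := by
    funext n
    cases n with
    | zero => simp [hg, hf2, cpoch_zero]
    | succ k =>
      show g (k+1) - (x:ℂ) * g k = _
      rw [hg]
      simp only
      have hfk : ((k.factorial : ℂ)) ≠ 0 := by exact_mod_cast Nat.factorial_ne_zero k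
      have hfk1 : (((k+1).factorial : ℂ)) ≠ 0 := by exact_mod_cast Nat.factorial_ne_zero (k+1)
      have hrec : cpoch (a+1) (k+1) = cpoch (a+1) k * (a + 1 + k) := cpoch_succ _ _
      have hleft : cpoch a (k+1) = a * cpoch (a+1) k := cpoch_succ_left _ _
      have hfact : ((k+1).factorial : ℂ) = (k+1) * (k.factorial : ℂ) := by
        rw [Nat.factorial_succ]; push_cast; ring
      have hk1 : ((k:ℂ)+1) ≠ 0 := by
        have := Nat.cast_add_one_ne_zero (R := ℂ) k
        push_cast at this
        exact this
      rw [hrec, hleft, hfact]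
      field_simp
      ring
  rw [hfun] at H4
  have : S - (x:ℂ) * S = (1 - (x:ℂ)) * S := by ring
  rwa [this] at H4

lemma binom_aux : ∀ (k : ℕ) (a : ℂ), 0 < a.re + k → ∀ (x : ℝ), 0 ≤ x → x < 1 →
    HasSum (fun n : ℕ => cpoch a n / (n.factorial : ℂ) * (x:ℂ)^n) (((1 - x : ℝ):ℂ)^(-a)) := by
  intro k
  induction k with
  | zero => intro a ha x h0 h1; exact binom_base a (by simpa using ha) x h0 h1
  | succ k ih =>
    intro a ha x h0 h1
    have ha' : 0 < (a+1).re + k := by simp [Complex.add_re]; push_cast at ha ⊢; linarith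
    have H := ih (a+1) ha' x h0 h1
    have H2 := binom_step a x _ H
    have hb : (0:ℝ) < 1 - x := by linarith
    have hne : ((1 - x : ℝ):ℂ) ≠ 0 := ofReal_ne_zero.mpr hb.ne'
    have hcast : (1 - (x:ℂ)) = ((1 - x : ℝ):ℂ) := by push_cast; ring
    have hpow : ((1 - x : ℝ):ℂ) * ((1 - x : ℝ):ℂ)^(-(a+1)) = ((1 - x : ℝ):ℂ)^(-a) := by
      nth_rewrite 1 [← Complex.cpow_one ((1 - x : ℝ):ℂ)]
      rw [← Complex.cpow_add _ _ hne]
      ring_nf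
    rwa [hcast, hpow] at H2

lemma binom (a : ℂ) (x : ℝ) (h0 : 0 ≤ x) (h1 : x < 1) :
    HasSum (fun n : ℕ => cpoch a n / (n.factorial : ℂ) * (x:ℂ)^n) (((1 - x : ℝ):ℂ)^(-a)) := by
  obtain ⟨k, hk⟩ := exists_nat_gt (-a.re)
  exact binom_aux k a (by linarith) x h0 h1


lemma subst_Ioo (f : ℝ → ℂ) {B A : ℝ} (h : B < A) :
    ∫ x in Ioo B A, f x = (A - B) • ∫ t in Ioo (0:ℝ) 1, f ((A-B)*t + B) := by
  have hs : A - B ≠ 0 := sub_ne_zero.mpr h.ne'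
  have h1 := intervalIntegral.integral_comp_mul_add (a := (0:ℝ)) (b := 1) f hs B
  rw [mul_zero, zero_add, mul_one, sub_add_cancel] at h1
  rw [← integral_Ioc_eq_integral_Ioo, ← intervalIntegral.integral_of_le h.le,
    ← integral_Ioc_eq_integral_Ioo, ← intervalIntegral.integral_of_le (zero_le_one), h1,
    smul_smul, mul_inv_cancel₀ hs, one_smul]


end Aux1

open Aux1

/-- Integral transform relating Gauss' `₂F₁` and Appell's `F₂`. -/
theorem statement1 (α β₁ β₂ γ₁ γ₂ : ℂ) (A B : ℝ)
    (hβ₁ : 0 < β₁.re) (hγ₁ : β₁.re < γ₁.re)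
    (hβ₂ : 0 < β₂.re) (hγ₂ : β₂.re < γ₂.re)
    (hB : 1 < B) (hAB : B < A) :
    (A : ℂ) ^ (-α) *
      appellF2 α β₁ β₂ γ₁ γ₂ (1 / (A : ℂ)) (1 - (B : ℂ) / (A : ℂ)) =
    Complex.Gamma γ₂ * ((A : ℂ) - (B : ℂ)) ^ (1 - γ₂) /
      (Complex.Gamma β₂ * Complex.Gamma (γ₂ - β₂)) *
    ∫ U in Set.Ioo B A,
      ((A : ℂ) - (U : ℂ)) ^ (β₂ - 1) * ((U : ℂ) - (B : ℂ)) ^ (γ₂ - β₂ - 1) *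
      (U : ℂ) ^ (-α) * hyp2F1 α β₁ γ₁ (1 / (U : ℂ)) := by
  -- ============ basic facts ============
  have hA1 : (1:ℝ) < A := hB.trans hAB
  have hA0 : (0:ℝ) < A := by linarith
  have hB0 : (0:ℝ) < B := by linarith
  have hs0 : (0:ℝ) < A - B := by linarith
  set s : ℝ := A - B with hsdef
  have hsc0 : (s:ℂ) ≠ 0 := ofReal_ne_zero.mpr hs0.ne'
  have hAc0 : (A:ℂ) ≠ 0 := ofReal_ne_zero.mpr hA0.ne'
  set r₁ : ℝ := A⁻¹ with hr₁def
  set r₂ : ℝ := s / A with hr₂def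
  have hr₁0 : 0 < r₁ := by positivity
  have hr₂0 : 0 < r₂ := by positivity
  have hr₂1 : r₂ < 1 := by rw [hr₂def, div_lt_one hA0]; linarith
  have hrsum : r₁ + r₂ < 1 := by
    rw [hr₁def, hr₂def, inv_eq_one_div, ← add_div, div_lt_one hA0]
    linarith
  have hγ₁0 : 0 < γ₁.re := lt_trans hβ₁ hγ₁
  have hγ₂0 : 0 < γ₂.re := lt_trans hβ₂ hγ₂
  have hδ0 : 0 < (γ₂ - β₂).re := by rw [sub_re]; linarith
  have hargA : (Complex.arg (A:ℂ)) ≠ Real.pi := by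
    rw [Complex.arg_ofReal_of_nonneg hA0.le]
    exact fun h => Real.pi_ne_zero h.symm
  -- ============ definitions ============
  set w : ℝ → ℂ := fun t => (t:ℂ)^(γ₂-β₂-1) * (1-(t:ℂ))^(β₂-1) with hw
  set Cm : ℕ → ℂ := fun m => cpoch α m * cpoch β₁ m / (cpoch γ₁ m * (m.factorial:ℂ)) *
    ((A:ℂ)^(-α) * (1/(A:ℂ))^m) with hCm
  set F : ℕ×ℕ → ℝ → ℂ := fun p t =>
    Cm p.1 * (cpoch (α+(p.1:ℂ)) p.2 / (p.2.factorial:ℂ) * ((r₂*(1-t):ℝ):ℂ)^p.2) * w t with hFdef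
  set Em : ℕ×ℕ → ℂ := fun p =>
    Cm p.1 * (cpoch (α+(p.1:ℂ)) p.2 / (p.2.factorial:ℂ) * ((r₂:ℝ):ℂ)^p.2) with hEm
  clear_value w Cm F Em
  set CA : ℝ := A ^ (-α.re) with hCA
  have hCA0 : 0 < CA := by positivity
  have hnormA : ‖(A:ℂ)^(-α)‖ = CA := by
    rw [Complex.norm_cpow_eq_rpow_re_of_pos hA0, neg_re, hCA]
  have hnormApow : ∀ m : ℕ, ‖(1/(A:ℂ))^m‖ = r₁^m := by
    intro m
    rw [norm_pow, one_div, norm_inv, Complex.norm_real, Real.norm_eq_abs,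
      _root_.abs_of_pos hA0, hr₁def]
  -- norm of Cm
  have hnormCm : ∀ m : ℕ, ‖Cm m‖ =
      ‖cpoch α m‖ * ‖cpoch β₁ m‖ / (‖cpoch γ₁ m‖ * m.factorial) * (CA * r₁^m) := by
    intro m
    rw [hCm]
    simp only [norm_mul, norm_div, Complex.norm_natCast]
    rw [hnormA, hnormApow]
  -- ============ the comparison series ============
  set ET : ℕ×ℕ → ℝ := fun p => ‖cpoch α (p.1+p.2)‖ * ‖cpoch β₁ p.1‖ /
      (‖cpoch γ₁ p.1‖ * p.1.factorial * p.2.factorial) * r₁^p.1 * r₂^p.2 with hET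
  have hETsum : Summable ET := sumE α β₁ γ₁ hγ₁0 hr₁0.le hr₂0.le hrsum
  have hET0 : ∀ p, 0 ≤ ET p := by
    rintro ⟨m, n⟩
    have hg : (0:ℝ) < ‖cpoch γ₁ m‖ := norm_pos_iff.mpr (cpoch_ne_zero γ₁ hγ₁0 m)
    simp only [hET]
    positivity
  -- ============ norm computations ============
  have hnormEm : ∀ p : ℕ×ℕ, ‖Em p‖ = CA * ET p := by
    rintro ⟨m, n⟩
    have hg : (0:ℝ) < ‖cpoch γ₁ m‖ := norm_pos_iff.mpr (cpoch_ne_zero γ₁ hγ₁0 m)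
    have hfm : (0:ℝ) < (m.factorial:ℝ) := by positivity
    have hfn : (0:ℝ) < (n.factorial:ℝ) := by positivity
    have hpochadd : ‖cpoch α (m+n)‖ = ‖cpoch α m‖ * ‖cpoch (α+m) n‖ := by
      rw [cpoch_add, norm_mul]
    rw [hEm, hET]
    dsimp only
    rw [norm_mul, norm_mul, hnormCm, norm_div, Complex.norm_natCast, norm_pow]
    simp only [Complex.norm_real, Real.norm_eq_abs]
    rw [_root_.abs_of_pos hr₂0, hpochadd]
    field_simp
  have hsumEm : Summable (fun p : ℕ×ℕ => ‖Em p‖) := by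
    apply ((hETsum.mul_left CA).congr)
    intro p
    rw [hnormEm]
  have hFle : ∀ (p : ℕ×ℕ), ∀ t ∈ Ioo (0:ℝ) 1, ‖F p t‖ ≤ ‖Em p‖ * ‖w t‖ := by
    rintro ⟨m, n⟩ t ht
    obtain ⟨ht0, ht1⟩ := ht
    have h1t : (0:ℝ) ≤ 1 - t := by linarith
    have hxt : |r₂ * (1-t)| ≤ |r₂| := by
      rw [_root_.abs_of_nonneg (mul_nonneg hr₂0.le h1t), _root_.abs_of_nonneg hr₂0.le]
      nlinarith [hr₂0.le]
    rw [hFdef, hEm]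
    dsimp only
    simp only [norm_mul, norm_pow]
    gcongr
    simp only [Complex.norm_real, Real.norm_eq_abs]
    exact hxt
  have hsumF : ∀ t ∈ Ioo (0:ℝ) 1, Summable (fun p : ℕ×ℕ => F p t) := by
    intro t ht
    apply Summable.of_norm
    apply Summable.of_nonneg_of_le (f := fun p : ℕ×ℕ => ‖Em p‖ * ‖w t‖)
      (fun p => norm_nonneg _) (fun p => hFle p t ht)
    exact hsumEm.mul_right _
  -- ============ integrability ============
  have hwint : IntegrableOn w (Ioo 0 1) volume := by
    rw [hw]
    have h := Complex.betaIntegral_convergent hδ0 hβ₂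
    rw [intervalIntegrable_iff_integrableOn_Ioc_of_le zero_le_one] at h
    exact (h.mono_set Ioo_subset_Ioc_self)
  have hb2n : ∀ n : ℕ, 0 < (β₂ + (n:ℂ)).re := by
    intro n
    rw [add_re, natCast_re]
    have : (0:ℝ) ≤ (n:ℝ) := Nat.cast_nonneg n
    linarith
  have hbase : ∀ n : ℕ, IntegrableOn
      (fun t:ℝ => (t:ℂ)^(γ₂-β₂-1) * (1-(t:ℂ))^(β₂+(n:ℂ)-1)) (Ioo 0 1) volume := by
    intro n
    have h := Complex.betaIntegral_convergent hδ0 (hb2n n)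
    rw [intervalIntegrable_iff_integrableOn_Ioc_of_le zero_le_one] at h
    exact (h.mono_set Ioo_subset_Ioc_self)
  have hFeq : ∀ p : ℕ×ℕ, EqOn (F p)
      (fun t => Em p * ((t:ℂ)^(γ₂-β₂-1) * (1-(t:ℂ))^(β₂+(p.2:ℂ)-1))) (Ioo 0 1) := by
    rintro ⟨m, n⟩ t ht
    obtain ⟨ht0, ht1⟩ := ht
    have h1t : (0:ℝ) < 1 - t := by linarith
    have h1tc0 : ((1-t:ℝ):ℂ) ≠ 0 := ofReal_ne_zero.mpr h1t.ne'
    have hcast : (1-(t:ℂ)) = ((1-t:ℝ):ℂ) := by push_cast; ring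
    have hsplitpow : ((r₂*(1-t):ℝ):ℂ)^n = ((r₂:ℝ):ℂ)^n * ((1-t:ℝ):ℂ)^n := by
      rw [Complex.ofReal_mul, mul_pow]
    have hcomb : ((1-t:ℝ):ℂ)^(β₂-1) * ((1-t:ℝ):ℂ)^(n:ℕ) = ((1-t:ℝ):ℂ)^(β₂+(n:ℂ)-1) := by
      rw [← Complex.cpow_natCast, ← Complex.cpow_add _ _ h1tc0]
      congr 1
      ring
    rw [hFdef, hw, hEm]
    dsimp only
    rw [hcast, hsplitpow, ← hcomb]
    ring
  have hFint : ∀ p : ℕ×ℕ, IntegrableOn (F p) (Ioo 0 1) volume := by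
    intro p
    exact MeasureTheory.IntegrableOn.congr_fun ((hbase p.2).const_mul (Em p))
      (hFeq p).symm measurableSet_Ioo
  have hFval : ∀ p : ℕ×ℕ, ∫ t in Ioo (0:ℝ) 1, F p t
      = Em p * Complex.betaIntegral (γ₂-β₂) (β₂+(p.2:ℂ)) := by
    intro p
    rw [setIntegral_congr_fun measurableSet_Ioo (hFeq p), MeasureTheory.integral_const_mul]
    congr 1
    rw [Complex.betaIntegral, intervalIntegral.integral_of_le zero_le_one,
      integral_Ioc_eq_integral_Ioo]
  -- ============ summability of integral norms ============
  set I₀ : ℝ := ∫ t in Ioo (0:ℝ) 1, ‖w t‖ with hI₀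
  have hFnormsum : Summable (fun p : ℕ×ℕ => ∫ t in Ioo (0:ℝ) 1, ‖F p t‖) := by
    apply Summable.of_nonneg_of_le (f := fun p : ℕ×ℕ => ‖Em p‖ * I₀)
      (fun p => integral_nonneg (fun t => norm_nonneg _))
    · intro p
      calc ∫ t in Ioo (0:ℝ) 1, ‖F p t‖
          ≤ ∫ t in Ioo (0:ℝ) 1, ‖Em p‖ * ‖w t‖ := by
            apply setIntegral_mono_on ((hFint p).norm) (hwint.norm.const_mul _)
              measurableSet_Ioo
            intro t ht
            exact hFle p t ht
        _ = ‖Em p‖ * I₀ := by rw [MeasureTheory.integral_const_mul, hI₀]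
    · exact hsumEm.mul_right I₀
  have hinterchange :
      (∑' p : ℕ×ℕ, ∫ t in Ioo (0:ℝ) 1, F p t) = ∫ t in Ioo (0:ℝ) 1, ∑' p : ℕ×ℕ, F p t :=
    integral_tsum_of_summable_integral_norm (fun p => hFint p) hFnormsum
  -- ============ pointwise expansion of the integrand ============
  have hpt : ∀ t ∈ Ioo (0:ℝ) 1,
      ((A:ℂ) - ((s*t+B:ℝ):ℂ))^(β₂-1) * (((s*t+B:ℝ):ℂ) - (B:ℂ))^(γ₂-β₂-1) *
        ((s*t+B:ℝ):ℂ)^(-α) * hyp2F1 α β₁ γ₁ (1/((s*t+B:ℝ):ℂ))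
      = (s:ℂ)^(β₂-1) * ((s:ℂ)^(γ₂-β₂-1) * ∑' p : ℕ×ℕ, F p t) := by
    intro t ht
    obtain ⟨ht0, ht1⟩ := ht
    have h1t : (0:ℝ) < 1 - t := by linarith
    set u : ℝ := s*t+B with hu
    have hst0 : (0:ℝ) < s*t := by positivity
    have hu1 : 1 < u := by rw [hu]; linarith
    have hu0 : (0:ℝ) < u := by linarith
    have huc0 : (u:ℂ) ≠ 0 := ofReal_ne_zero.mpr hu0.ne'
    have e1 : (A:ℂ) - ((u:ℝ):ℂ) = ((s*(1-t):ℝ):ℂ) := by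
      rw [hu, hsdef]; push_cast; ring
    have e2 : ((u:ℝ):ℂ) - (B:ℂ) = ((s*t:ℝ):ℂ) := by
      rw [hu]; push_cast; ring
    have e3 : ((s*(1-t):ℝ):ℂ)^(β₂-1) = (s:ℂ)^(β₂-1) * ((1-t:ℝ):ℂ)^(β₂-1) := by
      rw [Complex.ofReal_mul]; exact mul_cpow_ofReal_nonneg hs0.le h1t.le _
    have e4 : ((s*t:ℝ):ℂ)^(γ₂-β₂-1) = (s:ℂ)^(γ₂-β₂-1) * ((t:ℝ):ℂ)^(γ₂-β₂-1) := by
      rw [Complex.ofReal_mul]; exact mul_cpow_ofReal_nonneg hs0.le ht0.le _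
    have hx0 : (0:ℝ) ≤ r₂*(1-t) := mul_nonneg hr₂0.le h1t.le
    have hx1 : r₂*(1-t) < 1 := by nlinarith [hr₂0, hr₂1]
    have hinner : ∀ m : ℕ, (∑' n : ℕ, F (m, n) t) =
        (w t * (u:ℂ)^(-α)) *
          (cpoch α m * cpoch β₁ m / (cpoch γ₁ m * (m.factorial:ℂ)) * (1/(u:ℂ))^m) := by
      intro m
      have hbin := binom (α + m) (r₂*(1-t)) hx0 hx1
      have hgoal := (hbin.mul_left (Cm m)).mul_right (w t)
      have hfeq : (fun n : ℕ => Cm m *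
          (cpoch (α+(m:ℂ)) n / (n.factorial:ℂ) * ((r₂*(1-t):ℝ):ℂ)^n) * w t)
          = fun n : ℕ => F (m, n) t := by
        funext n; rw [hFdef]
      rw [hfeq] at hgoal
      rw [hgoal.tsum_eq]
      -- cpow algebra
      have hxu : ((1 - r₂*(1-t) : ℝ):ℂ) = ((u * A⁻¹ : ℝ):ℂ) := by
        norm_cast
        rw [hr₂def, hu, hsdef]
        field_simp
        ring
      have hsplit2 : ((1 - r₂*(1-t) : ℝ):ℂ)^(-(α+(m:ℂ))) =
          ((u:ℝ):ℂ)^(-(α+(m:ℂ))) * ((A⁻¹:ℝ):ℂ)^(-(α+(m:ℂ))) := by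
        rw [hxu, Complex.ofReal_mul]
        exact mul_cpow_ofReal_nonneg hu0.le (inv_nonneg.mpr hA0.le) _
      have hAinv : ((A⁻¹:ℝ):ℂ)^(-(α+(m:ℂ))) = (A:ℂ)^α * (A:ℂ)^m := by
        rw [Complex.ofReal_inv, Complex.inv_cpow _ _ hargA, ← Complex.cpow_neg, neg_neg,
          Complex.cpow_add _ _ hAc0, Complex.cpow_natCast]
      have hupow : ((u:ℝ):ℂ)^(-(α+(m:ℂ))) = (u:ℂ)^(-α) * ((1:ℂ)/(u:ℂ))^m := by
        have hee : -(α+(m:ℂ)) = (-α) + (-(m:ℂ)) := by ring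
        rw [hee, Complex.cpow_add _ _ huc0]
        congr 1
        rw [Complex.cpow_neg, Complex.cpow_natCast, one_div, inv_pow]
      rw [hsplit2, hAinv, hupow, hCm]
      have hApow : (A:ℂ)^(-α) * (A:ℂ)^α = 1 := by
        rw [← Complex.cpow_add _ _ hAc0]; simp
      have hApow2 : (1/(A:ℂ))^m * (A:ℂ)^m = 1 := by
        rw [← mul_pow]; field_simp; exact one_pow m
      calc cpoch α m * cpoch β₁ m / (cpoch γ₁ m * (m.factorial:ℂ)) *
            ((A:ℂ)^(-α) * (1/(A:ℂ))^m) *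
            ((u:ℂ)^(-α) * ((1:ℂ)/(u:ℂ))^m * ((A:ℂ)^α * (A:ℂ)^m)) * w t
          = (w t * (u:ℂ)^(-α)) *
            (cpoch α m * cpoch β₁ m / (cpoch γ₁ m * (m.factorial:ℂ)) * (1/(u:ℂ))^m) *
            (((A:ℂ)^(-α) * (A:ℂ)^α) * ((1/(A:ℂ))^m * (A:ℂ)^m)) := by ring
        _ = _ := by rw [hApow, hApow2]; ring
    have hprod : (∑' p : ℕ×ℕ, F p t) =
        (w t * (u:ℂ)^(-α)) * hyp2F1 α β₁ γ₁ (1/(u:ℂ)) := by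
      rw [Summable.tsum_prod' (hsumF t ⟨ht0, ht1⟩) (fun m => (hsumF t ⟨ht0, ht1⟩).prod_factor m)]
      rw [tsum_congr hinner, tsum_mul_left]
      rfl
    rw [e1, e2, e3, e4, hprod, hw]
    push_cast
    ring
  -- ============ value of each integral ============
  have hbetaval : ∀ n : ℕ, Complex.betaIntegral (γ₂-β₂) (β₂+(n:ℂ)) =
      Complex.Gamma (γ₂-β₂) * (cpoch β₂ n * Complex.Gamma β₂) /
        (cpoch γ₂ n * Complex.Gamma γ₂) := by
    intro n
    have h := Complex.Gamma_mul_Gamma_eq_betaIntegral hδ0 (hb2n n)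
    have hexp : γ₂ - β₂ + (β₂ + (n:ℂ)) = γ₂ + (n:ℂ) := by ring
    rw [hexp, Complex.Gamma_add_nat γ₂ hγ₂0 n, Complex.Gamma_add_nat β₂ hβ₂ n] at h
    have hne : cpoch γ₂ n * Complex.Gamma γ₂ ≠ 0 :=
      mul_ne_zero (cpoch_ne_zero γ₂ hγ₂0 n) (Complex.Gamma_pos_ne_zero γ₂ hγ₂0)
    rw [eq_div_iff hne]
    linear_combination -h
  -- ============ s-power cancellation ============
  have hABs : (A:ℂ) - (B:ℂ) = ((s:ℝ):ℂ) := by rw [hsdef]; push_cast; ring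
  have hspow : (s:ℂ)^(1-γ₂) * ((s:ℂ) * ((s:ℂ)^(β₂-1) * (s:ℂ)^(γ₂-β₂-1))) = 1 := by
    have hexpand : (s:ℂ)^((1-γ₂) + ((1:ℂ) + ((β₂-1) + (γ₂-β₂-1)))) =
        (s:ℂ)^(1-γ₂) * ((s:ℂ)^(1:ℂ) * ((s:ℂ)^(β₂-1) * (s:ℂ)^(γ₂-β₂-1))) := by
      rw [Complex.cpow_add _ _ hsc0, Complex.cpow_add _ _ hsc0, Complex.cpow_add _ _ hsc0]
    have hzero : (1-γ₂) + ((1:ℂ) + ((β₂-1) + (γ₂-β₂-1))) = 0 := by ring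
    rw [Complex.cpow_one] at hexpand
    rw [← hexpand, hzero, Complex.cpow_zero]
  have hz2 : ((r₂:ℝ):ℂ) = 1 - (B:ℂ)/(A:ℂ) := by
    rw [hr₂def, hsdef]
    push_cast
    field_simp
  -- ============ final assembly ============
  have hsubst := subst_Ioo (fun U : ℝ => ((A:ℂ) - (U:ℂ))^(β₂-1) *
    ((U:ℂ) - (B:ℂ))^(γ₂-β₂-1) * (U:ℂ)^(-α) * hyp2F1 α β₁ γ₁ (1/(U:ℂ))) hAB
  rw [← hsdef] at hsubst
  rw [hsubst]
  have hIeq : (∫ t in Ioo (0:ℝ) 1, ((A:ℂ) - ((s*t+B:ℝ):ℂ))^(β₂-1) *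
        (((s*t+B:ℝ):ℂ) - (B:ℂ))^(γ₂-β₂-1) * ((s*t+B:ℝ):ℂ)^(-α) *
        hyp2F1 α β₁ γ₁ (1/((s*t+B:ℝ):ℂ)))
      = ∫ t in Ioo (0:ℝ) 1, (s:ℂ)^(β₂-1) * ((s:ℂ)^(γ₂-β₂-1) * ∑' p : ℕ×ℕ, F p t) :=
    setIntegral_congr_fun measurableSet_Ioo (fun t ht => hpt t ht)
  rw [hIeq, MeasureTheory.integral_const_mul, MeasureTheory.integral_const_mul,
    ← hinterchange, tsum_congr hFval]
  rw [Complex.real_smul, hABs]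
  simp only [appellF2]
  rw [← tsum_mul_left, ← tsum_mul_left, ← tsum_mul_left, ← tsum_mul_left, ← tsum_mul_left]
  apply tsum_congr
  rintro ⟨m, n⟩
  rw [hEm, hCm]
  dsimp only
  rw [hbetaval n, hz2, cpoch_add α m n]
  have hΓβ : Complex.Gamma β₂ ≠ 0 := Complex.Gamma_pos_ne_zero β₂ hβ₂
  have hΓγ : Complex.Gamma γ₂ ≠ 0 := Complex.Gamma_pos_ne_zero γ₂ hγ₂0
  have hΓδ : Complex.Gamma (γ₂-β₂) ≠ 0 := Complex.Gamma_pos_ne_zero _ hδ0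
  have hpγ₁ : cpoch γ₁ m ≠ 0 := cpoch_ne_zero γ₁ hγ₁0 m
  have hpγ₂ : cpoch γ₂ n ≠ 0 := cpoch_ne_zero γ₂ hγ₂0 n
  have hfm : ((m.factorial:ℂ)) ≠ 0 := by exact_mod_cast Nat.factorial_ne_zero m
  have hfn : ((n.factorial:ℂ)) ≠ 0 := by exact_mod_cast Nat.factorial_ne_zero n
  have hrw : ∀ X : ℂ, Complex.Gamma γ₂ * ((s:ℝ):ℂ)^(1-γ₂) /
        (Complex.Gamma β₂ * Complex.Gamma (γ₂-β₂)) *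
        ((s:ℂ) * ((s:ℂ)^(β₂-1) * ((s:ℂ)^(γ₂-β₂-1) * X)))
      = Complex.Gamma γ₂ / (Complex.Gamma β₂ * Complex.Gamma (γ₂-β₂)) * X := by
    intro X
    have hre : Complex.Gamma γ₂ * ((s:ℝ):ℂ)^(1-γ₂) /
          (Complex.Gamma β₂ * Complex.Gamma (γ₂-β₂)) *
          ((s:ℂ) * ((s:ℂ)^(β₂-1) * ((s:ℂ)^(γ₂-β₂-1) * X)))
        = Complex.Gamma γ₂ / (Complex.Gamma β₂ * Complex.Gamma (γ₂-β₂)) * X *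
          ((s:ℂ)^(1-γ₂) * ((s:ℂ) * ((s:ℂ)^(β₂-1) * (s:ℂ)^(γ₂-β₂-1)))) := by ring
    rw [hre, hspow, mul_one]
  rw [hrw]
  have hGam : Complex.Gamma γ₂ / (Complex.Gamma β₂ * Complex.Gamma (γ₂-β₂)) *
      (Complex.Gamma (γ₂-β₂) * (cpoch β₂ n * Complex.Gamma β₂) /
        (cpoch γ₂ n * Complex.Gamma γ₂)) = cpoch β₂ n / cpoch γ₂ n := by
    field_simp
  linear_combination (-(cpoch α m * cpoch β₁ m / (cpoch γ₁ m * (m.factorial:ℂ)) *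
    ((A:ℂ)^(-α) * (1/(A:ℂ))^m) *
    (cpoch (α+(m:ℂ)) n / (n.factorial:ℂ) * (1 - (B:ℂ)/(A:ℂ))^n))) * hGam
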